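/- Let s ∈ ℝ^N be a strong-decaying signal with decay factor p > 1, meaning its magnitudes sorted in decreasing order satisfy |s|_{(l)} ≥ p·|s|_{(l+1)} for 1 ≤ l ≤ N−1. Let s_K be the best K-term approximation (keeping the K largest magnitudes) and s_K^c = s − s_K. Then ‖s_K^c‖₂ / ‖s‖₂ ≤ p^{−K}. -/

import Mathlib

open Matrix Finset

/-- The ℓ₂ norm of a finite real vector. -/
noncomputable def l2 {n : ℕ} (v : Fin n → ℝ) : ℝ := Real.sqrt (∑ i, (v i) ^ 2)

/-- The ℓ₁ norm of a finite real vector. -/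
noncomputable def l1 {n : ℕ} (v : Fin n → ℝ) : ℝ := ∑ i, |v i|

/-- A vector is `K`-sparse if it has at most `K` nonzero entries. -/
def IsSparse {n : ℕ} (K : ℕ) (v : Fin n → ℝ) : Prop :=
  ∃ S : Finset (Fin n), S.card ≤ K ∧ ∀ i ∉ S, v i = 0

/-- `A` satisfies the RIP of order `K` with constant `δ`. -/
def SatisfiesRIP {m n : ℕ} (A : Matrix (Fin m) (Fin n) ℝ) (K : ℕ) (δ : ℝ) : Prop :=
  ∀ v : Fin n → ℝ, IsSparse K v →
    (1 - δ) * (l2 v) ^ 2 ≤ (l2 (A.mulVec v)) ^ 2 ∧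
      (l2 (A.mulVec v)) ^ 2 ≤ (1 + δ) * (l2 v) ^ 2

/-- Spectral norm (ℓ₂ operator norm) of a matrix. -/
noncomputable def specNorm {m n : ℕ} (A : Matrix (Fin m) (Fin n) ℝ) : ℝ :=
  sSup {c | ∃ v : Fin n → ℝ, l2 v ≤ 1 ∧ c = l2 (A.mulVec v)}

/-- The matrix with the columns of `A` indexed by `S` kept and all other columns zeroed,
representing the column-submatrix `A_S`. -/
def colRestrict {m n : ℕ} (A : Matrix (Fin m) (Fin n) ℝ) (S : Finset (Fin n)) :
    Matrix (Fin m) (Fin n) ℝ := fun i j => if j ∈ S then A i j else 0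

/-- `‖A‖₂^{(K)}`: the largest spectral norm over all `K`-column submatrices of `A`. -/
noncomputable def subNorm {m n : ℕ} (A : Matrix (Fin m) (Fin n) ℝ) (K : ℕ) : ℝ :=
  sSup {c | ∃ S : Finset (Fin n), S.card = K ∧ c = specNorm (colRestrict A S)}

/-- The pseudo-inverse `(BᵀB)⁻¹Bᵀ` of a full-column-rank matrix `B`. -/
noncomputable def pinv {m k : ℕ} (B : Matrix (Fin m) (Fin k) ℝ) : Matrix (Fin k) (Fin m) ℝ :=
  (Bᵀ * B)⁻¹ * Bᵀ

/-- `sK` is a best `K`-term (ℓ₂) approximation of `s`. -/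
def IsBestApprox {n : ℕ} (K : ℕ) (s sK : Fin n → ℝ) : Prop :=
  IsSparse K sK ∧ ∀ t : Fin n → ℝ, IsSparse K t → l2 (s - sK) ≤ l2 (s - t)

/-- Embed a vector indexed by `Fin k` into `Fin n` along an injection `f` (zero elsewhere). -/
noncomputable def embedVec {k n : ℕ} (f : Fin k → Fin n) (w : Fin k → ℝ) : Fin n → ℝ :=
  fun j => ∑ i, if f i = j then w i else 0

/-- For a strong-decaying signal (sorted magnitudes decaying with ratio `p > 1`),
the relative ℓ₂ tail after the best `K`-term approximation is at most `p^{-K}`. -/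
theorem stmt5 {N : ℕ} (s : Fin N → ℝ) (hs : s ≠ 0) (p : ℝ) (hp : 1 < p)
    (hdecay : ∀ l : Fin N, ∀ hl : (l : ℕ) + 1 < N, |s l| ≥ p * |s ⟨(l : ℕ) + 1, hl⟩|)
    (K : ℕ) (hK1 : 1 ≤ K) (hKN : K ≤ N) :
    l2 (fun i => if (i : ℕ) < K then 0 else s i) / l2 s ≤ p ^ (-(K : ℤ)) := by
  have hp0 : 0 < p := lt_trans one_pos hp
  have hpK : (0:ℝ) < p ^ K := by positivity
  have step : ∀ k a (h : a + k < N), p ^ k * |s ⟨a + k, h⟩| ≤ |s ⟨a, by omega⟩| := by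
    intro k
    induction k with
    | zero => intro a h; simp
    | succ k ih =>
      intro a h
      have h1 : a + k < N := by omega
      have hd := hdecay ⟨a + k, h1⟩ (by omega)
      calc p ^ (k+1) * |s ⟨a + (k+1), h⟩|
          = p ^ k * (p * |s ⟨a + k + 1, by omega⟩|) := by
            have : a + (k+1) = a + k + 1 := by omega
            simp only [this]; ring
        _ ≤ p ^ k * |s ⟨a + k, h1⟩| := by
            apply mul_le_mul_of_nonneg_left _ (by positivity)
            simpa using hd
        _ ≤ |s ⟨a, by omega⟩| := ih a h1
  set g : Fin N → Fin N := fun i => ⟨(i : ℕ) - K, by omega⟩ with hg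
  have key : ∀ i : Fin N, K ≤ (i : ℕ) →
      (s i) ^ 2 ≤ (p ^ K)⁻¹ ^ 2 * (s (g i)) ^ 2 := by
    intro i hi
    have h : (i : ℕ) - K + K < N := by omega
    have hst := step K ((i : ℕ) - K) h
    have hieq : (⟨(i : ℕ) - K + K, h⟩ : Fin N) = i := by ext; simp; omega
    rw [hieq] at hst
    have h2 : |s i| ≤ (p ^ K)⁻¹ * |s (g i)| := by
      rw [inv_mul_eq_div, le_div_iff₀ hpK]
      nlinarith [hst]
    calc (s i) ^ 2 = |s i| ^ 2 := (sq_abs _).symm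
      _ ≤ ((p ^ K)⁻¹ * |s (g i)|) ^ 2 := by
          apply pow_le_pow_left₀ (abs_nonneg _) h2
      _ = (p ^ K)⁻¹ ^ 2 * (s (g i)) ^ 2 := by rw [mul_pow, sq_abs]
  set T : Finset (Fin N) := Finset.univ.filter (fun i : Fin N => K ≤ (i : ℕ)) with hT
  have hsum : ∑ i : Fin N, (if (i : ℕ) < K then 0 else s i) ^ 2
      ≤ (p ^ K)⁻¹ ^ 2 * ∑ i : Fin N, (s i) ^ 2 := by
    have e1 : ∑ i : Fin N, (if (i : ℕ) < K then 0 else s i) ^ 2 = ∑ i ∈ T, (s i) ^ 2 := by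
      rw [hT, Finset.sum_filter]
      apply Finset.sum_congr rfl
      intro i _
      by_cases h : K ≤ (i : ℕ)
      · rw [if_pos h, if_neg (by omega)]
      · rw [if_neg h, if_pos (by omega)]; ring
    have einj : ∀ a ∈ T, ∀ b ∈ T, g a = g b → a = b := by
      intro a ha b hb hab
      simp only [hT, Finset.mem_filter] at ha hb
      have h1 : (a : ℕ) - K = (b : ℕ) - K := congrArg Fin.val hab
      ext
      omega
    have e2 : ∑ i ∈ T, (s (g i)) ^ 2 ≤ ∑ i : Fin N, (s i) ^ 2 := by
      calc ∑ i ∈ T, (s (g i)) ^ 2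
          = ∑ j ∈ T.image g, (s j) ^ 2 := by rw [Finset.sum_image einj]
        _ ≤ ∑ i : Fin N, (s i) ^ 2 := by
            apply Finset.sum_le_sum_of_subset_of_nonneg (Finset.subset_univ _)
            intro i _ _; positivity
    calc ∑ i : Fin N, (if (i : ℕ) < K then 0 else s i) ^ 2
        = ∑ i ∈ T, (s i) ^ 2 := e1
      _ ≤ ∑ i ∈ T, (p ^ K)⁻¹ ^ 2 * (s (g i)) ^ 2 := by
          apply Finset.sum_le_sum
          intro i hi
          exact key i (by simpa [hT] using hi)
      _ = (p ^ K)⁻¹ ^ 2 * ∑ i ∈ T, (s (g i)) ^ 2 := by rw [Finset.mul_sum]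
      _ ≤ (p ^ K)⁻¹ ^ 2 * ∑ i : Fin N, (s i) ^ 2 := by
          apply mul_le_mul_of_nonneg_left e2 (by positivity)
  -- l2 s > 0
  have hspos : 0 < l2 s := by
    obtain ⟨j, hj⟩ : ∃ j, s j ≠ 0 := by
      by_contra h
      push_neg at h
      exact hs (funext h)
    apply Real.sqrt_pos.mpr
    apply Finset.sum_pos' (fun i _ => by positivity)
    exact ⟨j, Finset.mem_univ j, by positivity⟩
  have hl2 : l2 (fun i => if (i : ℕ) < K then 0 else s i) ≤ (p ^ K)⁻¹ * l2 s := by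
    unfold l2
    rw [← Real.sqrt_sq (le_of_lt (by positivity : (0:ℝ) < (p ^ K)⁻¹)),
      ← Real.sqrt_mul (by positivity)]
    exact Real.sqrt_le_sqrt hsum
  rw [div_le_iff₀ hspos]
  calc l2 (fun i => if (i : ℕ) < K then 0 else s i) ≤ (p ^ K)⁻¹ * l2 s := hl2
    _ = p ^ (-(K : ℤ)) * l2 s := by rw [_root_.zpow_neg, zpow_natCast]
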